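/- Let S ⊆ R be SRSs over Σ and let split_rel(S,R) = (S', split(R)), where S' consists of the (splitA) rules arising from rules of S together with the (splitF) rules arising from rules of S. Then S' is string terminating relative to split(R) (i.e., →_{S'} is terminating relative to →_{split(R)}) if and only if S is cycle terminating relative to R (i.e., ∘→_S is terminating relative to ∘→_R). -/

import Mathlib

namespace CycleRewriting

/-- A binary relation is terminating if there is no infinite reduction sequence. -/
def Terminating {beta : Type*} (r : beta → beta → Prop) : Prop :=
  ¬ ∃ f : ℕ → beta, ∀ n : ℕ, r (f n) (f (n + 1))

/-- `r₁` is terminating relative to `r₂` iff every infinite `r₂`-sequence contains only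
finitely many `r₁`-steps. -/
def RelTerminating {beta : Type*} (r₁ r₂ : beta → beta → Prop) : Prop :=
  ¬ ∃ f : ℕ → beta, (∀ n : ℕ, r₂ (f n) (f (n + 1))) ∧
      {n : ℕ | r₁ (f n) (f (n + 1))}.Infinite

/-- The string rewrite relation of an SRS `R`. -/
def Step {α : Type*} (R : Set (List α × List α)) (x y : List α) : Prop :=
  ∃ u v l r, (l, r) ∈ R ∧ x = u ++ l ++ v ∧ y = u ++ r ++ v

/-- The prefix rewrite relation of an SRS `R`. -/
def PrefixStep {α : Type*} (R : Set (List α × List α)) (x y : List α) : Prop :=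
  ∃ l r w, (l, r) ∈ R ∧ x = l ++ w ∧ y = r ++ w

/-- The rotation equivalence `u ~ v` iff `u = w₁w₂` and `v = w₂w₁`. -/
def Sim {α : Type*} (u v : List α) : Prop :=
  ∃ w₁ w₂, u = w₁ ++ w₂ ∧ v = w₂ ++ w₁

/-- The cycle rewrite relation of an SRS `R` (on representatives of `Sim`-classes):
`[u] ∘→_R [v]` iff there are a rule `(l, r) ∈ R` and `w` with `l ++ w ∈ [u]` and
`r ++ w ∈ [v]`. -/
def CycleStep {α : Type*} (R : Set (List α × List α)) (x y : List α) : Prop :=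
  ∃ l r w, (l, r) ∈ R ∧ Sim (l ++ w) x ∧ Sim (r ++ w) y

/-- The shift relation `↷`: move the first symbol of a string to its end. -/
def Rot {α : Type*} (u v : List α) : Prop :=
  ∃ a w, u = a :: w ∧ v = w ++ [a]

/-- `k`-fold composition of a relation. -/
def RelPow {beta : Type*} (r : beta → beta → Prop) : ℕ → beta → beta → Prop
  | 0 => Eq
  | n + 1 => Relation.Comp r (RelPow r n)

/-- `lenSRS R` is the maximal length of a left-hand side of a rule of `R`. -/
noncomputable def lenSRS {α : Type*} (R : Set (List α × List α)) : ℕ :=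
  sSup ((fun p : List α × List α => p.1.length) '' R)

/-- The alphabet of `split R`: the original alphabet `α`, a fresh copy of it, the
fresh symbols `B`, `E`, `W`, `L`, and fresh symbols `R_{i,j}` indexed by a rule and a
position. -/
inductive SplitSym (α : Type*) where
  | ca : α → SplitSym α          -- an original symbol of Σ
  | cbar : α → SplitSym α        -- its barred copy in the fresh copy of Σ
  | symB : SplitSym α
  | symE : SplitSym α
  | symW : SplitSym α
  | symL : SplitSym α
  | rul : List α × List α → ℕ → SplitSym α   -- the symbol R_{i,j} for rule i, split pos. j

open SplitSym in
/-- The transformation `split`. -/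
def splitSRS {α : Type*} (R : Set (List α × List α)) :
    Set (List (SplitSym α) × List (SplitSym α)) :=
  { p | (∃ l r, (l, r) ∈ R ∧ p = (l.map ca, r.map ca)) ∨                      -- splitA
        (∃ a : α, p = ([cbar a, symL], [symL, ca a])) ∨                        -- splitB
        p = ([symW, symL], [symB]) ∨                                          -- splitC
        (∃ l r, (l, r) ∈ R ∧ ∃ j, 1 ≤ j ∧ j < l.length ∧ ∃ a : α,
          p = ([rul (l, r) j, ca a], [cbar a, rul (l, r) j])) ∨               -- splitD
        (∃ l r, (l, r) ∈ R ∧ ∃ j, 1 ≤ j ∧ j < l.length ∧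
          p = (symB :: (l.drop j).map ca, [symW, rul (l, r) j])) ∨            -- splitE
        (∃ l r, (l, r) ∈ R ∧ ∃ j, 1 ≤ j ∧ j < l.length ∧
          p = (rul (l, r) j :: (l.take j).map ca ++ [symE],
               symL :: r.map ca ++ [symE])) }                                 -- splitF

open SplitSym in
/-- The strict rules of `split_rel (S, R)`: the (splitA) and (splitF) rules arising
from rules of `S`. -/
def splitStrict {α : Type*} (S : Set (List α × List α)) :
    Set (List (SplitSym α) × List (SplitSym α)) :=
  { p | (∃ l r, (l, r) ∈ S ∧ p = (l.map ca, r.map ca)) ∨                      -- splitA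
        (∃ l r, (l, r) ∈ S ∧ ∃ j, 1 ≤ j ∧ j < l.length ∧
          p = (rul (l, r) j :: (l.take j).map ca ++ [symE],
               symL :: r.map ca ++ [symE])) }                                 -- splitF

/-! ### Auxiliary material for the proof -/

open SplitSym

section AuxBasic

variable {α : Type*}

theorem sim_refl (u : List α) : Sim u u := ⟨u, [], by simp, by simp⟩

theorem sim_symm {u v : List α} : Sim u v → Sim v u := fun ⟨a, b, h1, h2⟩ => ⟨b, a, h2, h1⟩

theorem sim_trans {u v w : List α} : Sim u v → Sim v w → Sim u w := by
  rintro ⟨a, b, rfl, rfl⟩ ⟨c, d, h1, h2⟩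
  rcases List.append_eq_append_iff.mp h1 with ⟨e, rfl, rfl⟩ | ⟨e, rfl, rfl⟩
  · exact ⟨e, d ++ b, by simp, by simp [h2]⟩
  · exact ⟨a ++ c, e, by simp, by simp [h2]⟩

theorem cycleStep_mono {S R : Set (List α × List α)} (h : S ⊆ R) {x y : List α} :
    CycleStep S x y → CycleStep R x y := fun ⟨l, r, w, hm, h1, h2⟩ => ⟨l, r, w, h hm, h1, h2⟩

theorem cycleStep_mid {Q : Set (List α × List α)} {l r : List α} (h : (l, r) ∈ Q)
    (X Y : List α) : CycleStep Q (X ++ l ++ Y) (X ++ r ++ Y) :=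
  ⟨l, r, Y ++ X, h, ⟨l ++ Y, X, by simp, by simp⟩, ⟨r ++ Y, X, by simp, by simp⟩⟩

theorem cycleStep_wrap {Q : Set (List α × List α)} {l r : List α} (h : (l, r) ∈ Q) (j : ℕ)
    (A : List α) : CycleStep Q (l.drop j ++ A ++ l.take j) (A ++ r) :=
  ⟨l, r, A, h, ⟨l.take j, l.drop j ++ A, by rw [← List.append_assoc, List.take_append_drop], by simp⟩, ⟨r, A, rfl, rfl⟩⟩

end AuxBasic

section Decode

variable {α : Type*}

/-- separator symbols -/
def special : SplitSym α → Bool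
  | symB => true
  | symW => true
  | symE => true
  | _ => false

/-- marker symbols -/
def isMarker : SplitSym α → Bool
  | symL => true
  | rul _ _ => true
  | _ => false

/-- per-symbol decoding -/
def dsym : SplitSym α → List α
  | ca a => [a]
  | cbar a => [a]
  | _ => []

/-- the `ℓ_s` carried by a marker -/
def tmark : SplitSym α → List α
  | rul lr j => lr.1.drop j
  | _ => []

def dstr (p : List (SplitSym α)) : List α := p.flatMap dsym

def marks (p : List (SplitSym α)) : List (SplitSym α) := p.filter isMarker

def tlast (p : List (SplitSym α)) : List α :=
  match (marks p).getLast? with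
  | none => []
  | some s => tmark s

/-- the decoding of a piece as a cycle representative -/
def psi (p : List (SplitSym α)) : List α := tlast p ++ dstr p

@[simp] theorem dstr_nil : dstr ([] : List (SplitSym α)) = [] := rfl
@[simp] theorem dstr_cons {c : SplitSym α} {p} : dstr (c :: p) = dsym c ++ dstr p := rfl
@[simp] theorem dstr_append (p q : List (SplitSym α)) : dstr (p ++ q) = dstr p ++ dstr q :=
  List.flatMap_append

@[simp] theorem marks_nil : marks ([] : List (SplitSym α)) = [] := rfl
@[simp] theorem marks_append (p q : List (SplitSym α)) : marks (p ++ q) = marks p ++ marks q := by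
  simp [marks]

@[simp] theorem dstr_map_ca (l : List α) : dstr (l.map ca) = l := by
  induction l with
  | nil => rfl
  | cons a t ih => simp [dstr, dsym] at ih ⊢; exact ih

@[simp] theorem marks_map_ca (l : List α) : marks (l.map ca) = [] := by
  induction l with
  | nil => rfl
  | cons a t ih => simpa [marks, isMarker] using ih

end Decode

section Pieces

variable {α : Type*}

def piecesAux : List (SplitSym α) → List (SplitSym α) × List (List (SplitSym α))
  | [] => ([], [])
  | c :: t =>
    let p := piecesAux t
    if special c then ([], p.1 :: p.2) else (c :: p.1, p.2)

def allPieces (x : List (SplitSym α)) : List (List (SplitSym α)) :=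
  (piecesAux x).1 :: (piecesAux x).2

def seps (x : List (SplitSym α)) : List (SplitSym α) := x.filter special

@[simp] theorem allPieces_nil : allPieces ([] : List (SplitSym α)) = [[]] := rfl
@[simp] theorem seps_nil : seps ([] : List (SplitSym α)) = [] := rfl

theorem allPieces_cons_special {c : SplitSym α} (h : special c = true) (x) :
    allPieces (c :: x) = [] :: allPieces x := by
  simp [allPieces, piecesAux, h]

theorem allPieces_cons_clean {c : SplitSym α} (h : special c = false) {x hd tl}
    (hx : allPieces x = hd :: tl) : allPieces (c :: x) = (c :: hd) :: tl := by
  obtain ⟨h1, h2⟩ : (piecesAux x).1 = hd ∧ (piecesAux x).2 = tl := by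
    have := hx; simp [allPieces] at this; exact this
  simp [allPieces, piecesAux, h, h1, h2]

theorem seps_cons_special {c : SplitSym α} (h : special c = true) (x) :
    seps (c :: x) = c :: seps x := by simp [seps, h]

theorem seps_cons_clean {c : SplitSym α} (h : special c = false) (x) :
    seps (c :: x) = seps x := by simp [seps, h]

theorem allPieces_append_clean {m : List (SplitSym α)} (hm : ∀ c ∈ m, special c = false)
    {x hd tl} (hx : allPieces x = hd :: tl) : allPieces (m ++ x) = (m ++ hd) :: tl := by
  induction m with
  | nil => simpa using hx
  | cons c t ih =>
      have := allPieces_cons_clean (hm c (by simp)) (ih (fun c hc => hm c (by simp [hc])))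
      simpa using this

theorem seps_append_clean {m : List (SplitSym α)} (hm : ∀ c ∈ m, special c = false)
    (x) : seps (m ++ x) = seps x := by
  induction m with
  | nil => simp
  | cons c t ih => simpa [seps_cons_clean (hm c (by simp))] using
      (by exact ih (fun c hc => hm c (by simp [hc])))

theorem clean_map_ca (l : List α) : ∀ c ∈ l.map ca, special c = false := by
  intro c hc; obtain ⟨a, _, rfl⟩ := List.mem_map.mp hc; rfl

end Pieces
section SymLemmas

variable {α : Type*}

@[simp] theorem special_ca (a : α) : special (ca a) = false := rfl
@[simp] theorem special_cbar (a : α) : special (cbar a) = false := rfl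
@[simp] theorem special_symL : special (symL : SplitSym α) = false := rfl
@[simp] theorem special_symB : special (symB : SplitSym α) = true := rfl
@[simp] theorem special_symW : special (symW : SplitSym α) = true := rfl
@[simp] theorem special_symE : special (symE : SplitSym α) = true := rfl
@[simp] theorem special_rul (lr : List α × List α) (j : ℕ) : special (rul lr j) = false := rfl

@[simp] theorem isMarker_ca (a : α) : isMarker (ca a) = false := rfl
@[simp] theorem isMarker_cbar (a : α) : isMarker (cbar a) = false := rfl
@[simp] theorem isMarker_symL : isMarker (symL : SplitSym α) = true := rfl
@[simp] theorem isMarker_symB : isMarker (symB : SplitSym α) = false := rfl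
@[simp] theorem isMarker_symW : isMarker (symW : SplitSym α) = false := rfl
@[simp] theorem isMarker_symE : isMarker (symE : SplitSym α) = false := rfl
@[simp] theorem isMarker_rul (lr : List α × List α) (j : ℕ) : isMarker (rul lr j) = true := rfl

@[simp] theorem dsym_ca (a : α) : dsym (ca a) = [a] := rfl
@[simp] theorem dsym_cbar (a : α) : dsym (cbar a) = [a] := rfl
@[simp] theorem dsym_symL : dsym (symL : SplitSym α) = [] := rfl
@[simp] theorem dsym_rul (lr : List α × List α) (j : ℕ) : dsym (rul lr j) = [] := rfl

@[simp] theorem tmark_rul (lr : List α × List α) (j : ℕ) :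
    tmark (rul lr j) = lr.1.drop j := rfl
@[simp] theorem tmark_symL : tmark (symL : SplitSym α) = [] := rfl

@[simp] theorem marks_cons (c : SplitSym α) (p) :
    marks (c :: p) = if isMarker c then c :: marks p else marks p := by
  simp [marks, List.filter_cons]

@[simp] theorem marks_take_map_ca (j : ℕ) (l : List α) :
    marks ((List.map ca l).take j) = [] := by rw [← List.map_take]; exact marks_map_ca _
@[simp] theorem marks_drop_map_ca (j : ℕ) (l : List α) :
    marks ((List.map ca l).drop j) = [] := by rw [← List.map_drop]; exact marks_map_ca _
@[simp] theorem dstr_take_map_ca (j : ℕ) (l : List α) :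
    dstr ((List.map ca l).take j) = l.take j := by rw [← List.map_take]; exact dstr_map_ca _
@[simp] theorem dstr_drop_map_ca (j : ℕ) (l : List α) :
    dstr ((List.map ca l).drop j) = l.drop j := by rw [← List.map_drop]; exact dstr_map_ca _

theorem tlast_congr {p q : List (SplitSym α)} (h : marks p = marks q) : tlast p = tlast q := by
  unfold tlast; rw [h]

end SymLemmas

section PieceRel

variable {α : Type*}

/-- "free" (cons-closed) piece rewrite relations: splitA, neutral (splitB/splitD), splitF -/
def PRelF (Q : Set (List α × List α)) (p q : List (SplitSym α)) : Prop :=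
  (∃ l r a b, (l, r) ∈ Q ∧ p = a ++ l.map ca ++ b ∧ q = a ++ r.map ca ++ b) ∨
  (∃ a m₁ m₂ b, dstr m₁ = dstr m₂ ∧ marks m₁ = marks m₂ ∧
      p = a ++ m₁ ++ b ∧ q = a ++ m₂ ++ b) ∨
  (∃ l r j a, (l, r) ∈ Q ∧ p = a ++ rul (l, r) j :: (l.take j).map ca ∧
      q = a ++ symL :: r.map ca)

/-- strict piece rewrite relations: splitA and splitF from `S` -/
def SRel (Q : Set (List α × List α)) (p q : List (SplitSym α)) : Prop :=
  (∃ l r a b, (l, r) ∈ Q ∧ p = a ++ l.map ca ++ b ∧ q = a ++ r.map ca ++ b) ∨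
  (∃ l r j a, (l, r) ∈ Q ∧ p = a ++ rul (l, r) j :: (l.take j).map ca ∧
      q = a ++ symL :: r.map ca)

theorem srel_prelF {Q : Set (List α × List α)} {p q} (h : SRel Q p q) : PRelF Q p q := by
  rcases h with h | h
  · exact Or.inl h
  · exact Or.inr (Or.inr h)

theorem prelF_mono {Q Q' : Set (List α × List α)} (hQ : Q ⊆ Q') {p q}
    (h : PRelF Q p q) : PRelF Q' p q := by
  rcases h with ⟨l, r, a, b, hm, h1, h2⟩ | h | ⟨l, r, j, a, hm, h1, h2⟩
  · exact Or.inl ⟨l, r, a, b, hQ hm, h1, h2⟩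
  · exact Or.inr (Or.inl h)
  · exact Or.inr (Or.inr ⟨l, r, j, a, hQ hm, h1, h2⟩)

theorem psi_inA {Q : Set (List α × List α)} {l r : List α} (h : (l, r) ∈ Q)
    (a b : List (SplitSym α)) :
    CycleStep Q (psi (a ++ l.map ca ++ b)) (psi (a ++ r.map ca ++ b)) := by
  have hT : tlast (a ++ (l.map ca ++ b)) = tlast (a ++ (r.map ca ++ b)) :=
    tlast_congr (by simp)
  have e1 : psi (a ++ l.map ca ++ b)
      = (tlast (a ++ r.map ca ++ b) ++ dstr a) ++ l ++ dstr b := by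
    simp [psi, hT]
  have e2 : psi (a ++ r.map ca ++ b)
      = (tlast (a ++ r.map ca ++ b) ++ dstr a) ++ r ++ dstr b := by
    simp [psi]
  rw [e1, e2]; exact cycleStep_mid h _ _

theorem psi_neutral {a m₁ m₂ b : List (SplitSym α)} (h1 : dstr m₁ = dstr m₂)
    (h2 : marks m₁ = marks m₂) : psi (a ++ m₁ ++ b) = psi (a ++ m₂ ++ b) := by
  have hT : tlast (a ++ (m₁ ++ b)) = tlast (a ++ (m₂ ++ b)) := tlast_congr (by simp [h2])
  simp [psi, hT, h1]

theorem psi_sufF {Q : Set (List α × List α)} {l r : List α} {j : ℕ} (h : (l, r) ∈ Q)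
    (a : List (SplitSym α)) :
    CycleStep Q (psi (a ++ rul (l, r) j :: (l.take j).map ca))
      (psi (a ++ symL :: r.map ca)) := by
  have hm1 : marks (a ++ rul (l, r) j :: (List.map ca l).take j) = marks a ++ [rul (l, r) j] := by
    simp
  have hm2 : marks (a ++ symL :: r.map ca) = marks a ++ [symL] := by simp
  have ht1 : tlast (a ++ rul (l, r) j :: (List.map ca l).take j) = l.drop j := by
    unfold tlast; rw [hm1, List.getLast?_concat]; rfl
  have ht2 : tlast (a ++ symL :: r.map ca) = [] := by
    unfold tlast; rw [hm2, List.getLast?_concat]; rfl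
  have e1 : psi (a ++ rul (l, r) j :: (l.take j).map ca)
      = l.drop j ++ dstr a ++ l.take j := by simp [psi, ht1]
  have e2 : psi (a ++ symL :: r.map ca) = dstr a ++ r := by simp [psi, ht2]
  rw [e1, e2]; exact cycleStep_wrap h j (dstr a)

theorem psi_prelF {Q : Set (List α × List α)} {p q} (h : PRelF Q p q) :
    psi p = psi q ∨ CycleStep Q (psi p) (psi q) := by
  rcases h with ⟨l, r, a, b, hm, rfl, rfl⟩ | ⟨a, m₁, m₂, b, h1, h2, rfl, rfl⟩ |
    ⟨l, r, j, a, hm, rfl, rfl⟩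
  · exact Or.inr (psi_inA hm a b)
  · exact Or.inl (psi_neutral h1 h2)
  · exact Or.inr (psi_sufF hm a)

theorem psi_srel {Q : Set (List α × List α)} {p q} (h : SRel Q p q) :
    CycleStep Q (psi p) (psi q) := by
  rcases h with ⟨l, r, a, b, hm, rfl, rfl⟩ | ⟨l, r, j, a, hm, rfl, rfl⟩
  · exact psi_inA hm a b
  · exact psi_sufF hm a

theorem psi_preC (t : List (SplitSym α)) : psi (symL :: t) = psi t := by
  cases h : marks t with
  | nil =>
      have h1 : tlast (symL :: t) = [] := by unfold tlast; simp [h]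
      have h2 : tlast t = [] := by unfold tlast; simp [h]
      simp [psi, h1, h2]
  | cons m rest =>
      have h1 : tlast (symL :: t) = tlast t := by
        unfold tlast; simp [h, List.getLast?_cons_cons]
      simp [psi, h1]

theorem psi_preE {l r : List α} {j : ℕ} {t : List (SplitSym α)} (hmt : marks t = []) :
    psi ((l.drop j).map ca ++ t) = psi (rul (l, r) j :: t) := by
  have h1 : tlast ((List.map ca l).drop j ++ t) = [] := by unfold tlast; simp [hmt]
  have h2 : tlast (rul (l, r) j :: t) = l.drop j := by unfold tlast; simp [hmt]
  simp [psi, h1, h2]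

end PieceRel

section Localization

variable {α : Type*}

def LocF (P : List (SplitSym α) → List (SplitSym α) → Prop)
    (x y : List (SplitSym α)) : Prop :=
  ∃ a px py b, allPieces x = a ++ px :: b ∧ allPieces y = a ++ py :: b ∧
    seps x = seps y ∧ P px py

def LocA (Q : Set (List α × List α)) (x y : List (SplitSym α)) : Prop :=
  ∃ a px py b sa s s' sb, allPieces x = a ++ px :: b ∧ allPieces y = a ++ py :: b ∧
    seps x = sa ++ s :: sb ∧ seps y = sa ++ s' :: sb ∧ sa.length + 1 = a.length ∧
    ((px = symL :: py ∧ s = symW ∧ s' = symB) ∨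
     (∃ l r j t, (l, r) ∈ Q ∧ px = (l.drop j).map ca ++ t ∧ py = rul (l, r) j :: t ∧
        s = symB ∧ s' = symW))

def Loc (Q : Set (List α × List α)) (x y : List (SplitSym α)) : Prop :=
  LocF (PRelF Q) x y ∨ LocA Q x y

theorem locF_cons {P : List (SplitSym α) → List (SplitSym α) → Prop}
    (hP : ∀ c p q, P p q → P (c :: p) (c :: q)) (c : SplitSym α) {x y}
    (h : LocF P x y) : LocF P (c :: x) (c :: y) := by
  obtain ⟨a, px, py, b, hx, hy, hs, hpq⟩ := h
  by_cases hc : special c = true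
  · exact ⟨[] :: a, px, py, b, by rw [allPieces_cons_special hc, hx]; rfl,
      by rw [allPieces_cons_special hc, hy]; rfl,
      by rw [seps_cons_special hc, seps_cons_special hc, hs], hpq⟩
  · rw [Bool.not_eq_true] at hc
    cases a with
    | nil =>
        exact ⟨[], c :: px, c :: py, b, allPieces_cons_clean hc hx,
          allPieces_cons_clean hc hy,
          by rw [seps_cons_clean hc, seps_cons_clean hc, hs], hP c _ _ hpq⟩
    | cons a0 a' =>
        exact ⟨(c :: a0) :: a', px, py, b,
          by rw [allPieces_cons_clean hc hx]; rfl,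
          by rw [allPieces_cons_clean hc hy]; rfl,
          by rw [seps_cons_clean hc, seps_cons_clean hc, hs], hpq⟩

theorem locA_cons {Q : Set (List α × List α)} (c : SplitSym α) {x y}
    (h : LocA Q x y) : LocA Q (c :: x) (c :: y) := by
  obtain ⟨a, px, py, b, sa, s, s', sb, hx, hy, hsx, hsy, hlen, hpq⟩ := h
  by_cases hc : special c = true
  · exact ⟨[] :: a, px, py, b, c :: sa, s, s', sb,
      by rw [allPieces_cons_special hc, hx]; rfl,
      by rw [allPieces_cons_special hc, hy]; rfl,
      by rw [seps_cons_special hc, hsx]; rfl,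
      by rw [seps_cons_special hc, hsy]; rfl,
      by simpa using congrArg Nat.succ hlen, hpq⟩
  · rw [Bool.not_eq_true] at hc
    cases a with
    | nil => exact absurd hlen (by simp)
    | cons a0 a' =>
        exact ⟨(c :: a0) :: a', px, py, b, sa, s, s', sb,
          by rw [allPieces_cons_clean hc hx]; rfl,
          by rw [allPieces_cons_clean hc hy]; rfl,
          by rw [seps_cons_clean hc]; exact hsx,
          by rw [seps_cons_clean hc]; exact hsy,
          by simpa using hlen, hpq⟩

theorem prelF_cons {Q : Set (List α × List α)} (c : SplitSym α) {p q}
    (h : PRelF Q p q) : PRelF Q (c :: p) (c :: q) := by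
  rcases h with ⟨l, r, a, b, hm, rfl, rfl⟩ | ⟨a, m₁, m₂, b, h1, h2, rfl, rfl⟩ |
    ⟨l, r, j, a, hm, rfl, rfl⟩
  · exact Or.inl ⟨l, r, c :: a, b, hm, rfl, rfl⟩
  · exact Or.inr (Or.inl ⟨c :: a, m₁, m₂, b, h1, h2, rfl, rfl⟩)
  · exact Or.inr (Or.inr ⟨l, r, j, c :: a, hm, rfl, rfl⟩)

theorem srel_cons {Q : Set (List α × List α)} (c : SplitSym α) {p q}
    (h : SRel Q p q) : SRel Q (c :: p) (c :: q) := by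
  rcases h with ⟨l, r, a, b, hm, rfl, rfl⟩ | ⟨l, r, j, a, hm, rfl, rfl⟩
  · exact Or.inl ⟨l, r, c :: a, b, hm, rfl, rfl⟩
  · exact Or.inr ⟨l, r, j, c :: a, hm, rfl, rfl⟩

theorem loc_append {Q : Set (List α × List α)} (u : List (SplitSym α)) {x y}
    (h : Loc Q x y) : Loc Q (u ++ x) (u ++ y) := by
  induction u with
  | nil => exact h
  | cons c t ih =>
      rcases ih with ih | ih
      · exact Or.inl (locF_cons (fun c p q => prelF_cons c) c ih)
      · exact Or.inr (locA_cons c ih)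

theorem locF_srel_append {Q : Set (List α × List α)} (u : List (SplitSym α)) {x y}
    (h : LocF (SRel Q) x y) : LocF (SRel Q) (u ++ x) (u ++ y) := by
  induction u with
  | nil => exact h
  | cons c t ih => exact locF_cons (fun c p q => srel_cons c) c ih

end Localization
section LocMain

variable {α : Type*}

theorem locF_mono {P P' : List (SplitSym α) → List (SplitSym α) → Prop}
    (h : ∀ p q, P p q → P' p q) {x y} (hl : LocF P x y) : LocF P' x y := by
  obtain ⟨a, px, py, b, hx, hy, hs, hpq⟩ := hl
  exact ⟨a, px, py, b, hx, hy, hs, h _ _ hpq⟩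

theorem locF_base_A {Q : Set (List α × List α)} {l r : List α} (hlr : (l, r) ∈ Q)
    (v : List (SplitSym α)) : LocF (SRel Q) (l.map ca ++ v) (r.map ca ++ v) := by
  obtain ⟨hd, tl, hv⟩ : ∃ hd tl, allPieces v = hd :: tl := ⟨_, _, rfl⟩
  exact ⟨[], l.map ca ++ hd, r.map ca ++ hd, tl,
    by rw [allPieces_append_clean (clean_map_ca l) hv]; rfl,
    by rw [allPieces_append_clean (clean_map_ca r) hv]; rfl,
    by rw [seps_append_clean (clean_map_ca l), seps_append_clean (clean_map_ca r)],
    Or.inl ⟨l, r, [], hd, hlr, rfl, rfl⟩⟩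

theorem locF_base_F {Q : Set (List α × List α)} {l r : List α} {j : ℕ} (hlr : (l, r) ∈ Q)
    (v : List (SplitSym α)) :
    LocF (SRel Q) ((rul (l, r) j :: (l.take j).map ca ++ [symE]) ++ v)
      ((symL :: r.map ca ++ [symE]) ++ v) := by
  obtain ⟨hd, tl, hv⟩ : ∃ hd tl, allPieces v = hd :: tl := ⟨_, _, rfl⟩
  have hE : allPieces (symE :: v) = [] :: hd :: tl := by
    rw [allPieces_cons_special (by simp), hv]
  have clean1 : ∀ c ∈ rul (l, r) j :: (l.take j).map ca, special c = false := by
    intro c hc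
    rcases List.mem_cons.mp hc with rfl | hc
    · rfl
    · exact clean_map_ca _ c hc
  have clean2 : ∀ c ∈ symL :: r.map ca, special c = false := by
    intro c hc
    rcases List.mem_cons.mp hc with rfl | hc
    · rfl
    · exact clean_map_ca _ c hc
  have ex : (rul (l, r) j :: (l.take j).map ca ++ [symE]) ++ v
      = (rul (l, r) j :: (l.take j).map ca) ++ (symE :: v) := by simp
  have ey : (symL :: r.map ca ++ [symE]) ++ v = (symL :: r.map ca) ++ (symE :: v) := by simp
  rw [ex, ey]
  refine ⟨[], (rul (l, r) j :: (l.take j).map ca) ++ [], (symL :: r.map ca) ++ [], hd :: tl,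
    by rw [allPieces_append_clean clean1 hE]; rfl,
    by rw [allPieces_append_clean clean2 hE]; rfl,
    by rw [seps_append_clean clean1, seps_append_clean clean2],
    Or.inr ⟨l, r, j, [], hlr, by simp, by simp⟩⟩

theorem loc_base_B {Q : Set (List α × List α)} (a0 : α) (v : List (SplitSym α)) :
    Loc Q ([cbar a0, symL] ++ v) ([symL, ca a0] ++ v) := by
  obtain ⟨hd, tl, hv⟩ : ∃ hd tl, allPieces v = hd :: tl := ⟨_, _, rfl⟩
  have c1 : ∀ c ∈ [cbar a0, symL], special c = false := by
    intro c hc; rcases List.mem_cons.mp hc with rfl | hc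
    · rfl
    · simp at hc; rw [hc]; rfl
  have c2 : ∀ c ∈ [symL, ca a0], special c = false := by
    intro c hc; rcases List.mem_cons.mp hc with rfl | hc
    · rfl
    · simp at hc; rw [hc]; rfl
  exact Or.inl ⟨[], [cbar a0, symL] ++ hd, [symL, ca a0] ++ hd, tl,
    by rw [allPieces_append_clean c1 hv]; rfl,
    by rw [allPieces_append_clean c2 hv]; rfl,
    by rw [seps_append_clean c1, seps_append_clean c2],
    Or.inr (Or.inl ⟨[], [cbar a0, symL], [symL, ca a0], hd, by simp, by simp, rfl, rfl⟩)⟩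

theorem loc_base_D {Q : Set (List α × List α)} (lr : List α × List α) (j : ℕ) (a0 : α)
    (v : List (SplitSym α)) :
    Loc Q ([rul lr j, ca a0] ++ v) ([cbar a0, rul lr j] ++ v) := by
  obtain ⟨hd, tl, hv⟩ : ∃ hd tl, allPieces v = hd :: tl := ⟨_, _, rfl⟩
  have c1 : ∀ c ∈ [rul lr j, ca a0], special c = false := by
    intro c hc; rcases List.mem_cons.mp hc with rfl | hc
    · rfl
    · simp at hc; rw [hc]; rfl
  have c2 : ∀ c ∈ [cbar a0, rul lr j], special c = false := by
    intro c hc; rcases List.mem_cons.mp hc with rfl | hc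
    · rfl
    · simp at hc; rw [hc]; rfl
  exact Or.inl ⟨[], [rul lr j, ca a0] ++ hd, [cbar a0, rul lr j] ++ hd, tl,
    by rw [allPieces_append_clean c1 hv]; rfl,
    by rw [allPieces_append_clean c2 hv]; rfl,
    by rw [seps_append_clean c1, seps_append_clean c2],
    Or.inr (Or.inl ⟨[], [rul lr j, ca a0], [cbar a0, rul lr j], hd, by simp, by simp, rfl, rfl⟩)⟩

theorem loc_base_C {Q : Set (List α × List α)} (v : List (SplitSym α)) :
    Loc Q ([symW, symL] ++ v) ([symB] ++ v) := by
  obtain ⟨hd, tl, hv⟩ : ∃ hd tl, allPieces v = hd :: tl := ⟨_, _, rfl⟩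
  have hx : allPieces ([symW, symL] ++ v) = [] :: (symL :: hd) :: tl := by
    show allPieces (symW :: symL :: v) = _
    rw [allPieces_cons_special (by simp), allPieces_cons_clean (by simp) hv]
  have hy : allPieces ([symB] ++ v) = [] :: hd :: tl := by
    show allPieces (symB :: v) = _
    rw [allPieces_cons_special (by simp), hv]
  exact Or.inr ⟨[[]], symL :: hd, hd, tl, [], symW, symB, seps v, hx, hy,
    by show seps (symW :: symL :: v) = _
       rw [seps_cons_special (by simp), seps_cons_clean (by simp)]; rfl,
    by show seps (symB :: v) = _; rw [seps_cons_special (by simp)]; rfl,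
    rfl, Or.inl ⟨rfl, rfl, rfl⟩⟩

theorem loc_base_E {Q : Set (List α × List α)} {l r : List α} {j : ℕ} (hlr : (l, r) ∈ Q)
    (v : List (SplitSym α)) :
    Loc Q ((symB :: (l.drop j).map ca) ++ v) ([symW, rul (l, r) j] ++ v) := by
  obtain ⟨hd, tl, hv⟩ : ∃ hd tl, allPieces v = hd :: tl := ⟨_, _, rfl⟩
  have hx : allPieces ((symB :: (l.drop j).map ca) ++ v)
      = [] :: ((l.drop j).map ca ++ hd) :: tl := by
    show allPieces (symB :: ((l.drop j).map ca ++ v)) = _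
    rw [allPieces_cons_special (by simp), allPieces_append_clean (clean_map_ca _) hv]
  have hy : allPieces ([symW, rul (l, r) j] ++ v) = [] :: (rul (l, r) j :: hd) :: tl := by
    show allPieces (symW :: rul (l, r) j :: v) = _
    rw [allPieces_cons_special (by simp), allPieces_cons_clean (by simp) hv]
  exact Or.inr ⟨[[]], (l.drop j).map ca ++ hd, rul (l, r) j :: hd, tl, [], symB, symW, seps v,
    hx, hy,
    by show seps (symB :: ((l.drop j).map ca ++ v)) = _
       rw [seps_cons_special (by simp), seps_append_clean (clean_map_ca _)]; rfl,
    by show seps (symW :: rul (l, r) j :: v) = _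
       rw [seps_cons_special (by simp), seps_cons_clean (by simp)]; rfl,
    rfl, Or.inr ⟨l, r, j, hd, hlr, rfl, rfl, rfl, rfl⟩⟩

/-- The localization of an arbitrary rewrite step of `split R`. -/
theorem loc_of_step {R : Set (List α × List α)} {x y : List (SplitSym α)}
    (h : Step (splitSRS R) x y) : Loc R x y := by
  obtain ⟨u, v, l', r', hm, rfl, rfl⟩ := h
  rw [List.append_assoc, List.append_assoc]
  rcases hm with ⟨l, r, hlr, hp⟩ | ⟨a0, hp⟩ | hp | ⟨l, r, hlr, j, _, _, a0, hp⟩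
    | ⟨l, r, hlr, j, _, _, hp⟩ | ⟨l, r, hlr, j, _, _, hp⟩ <;>
    rw [Prod.ext_iff] at hp <;> obtain ⟨h1, h2⟩ := hp <;> simp only at h1 h2 <;>
    rw [h1, h2] <;> apply loc_append
  · exact Or.inl (locF_mono (fun _ _ => srel_prelF) (locF_base_A hlr v))
  · exact loc_base_B a0 v
  · exact loc_base_C v
  · exact loc_base_D (l, r) j a0 v
  · exact loc_base_E hlr v
  · exact Or.inl (locF_mono (fun _ _ => srel_prelF) (locF_base_F hlr v))

/-- The localization of a strict rewrite step. -/
theorem locF_of_strict_step {S : Set (List α × List α)} {x y : List (SplitSym α)}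
    (h : Step (splitStrict S) x y) : LocF (SRel S) x y := by
  obtain ⟨u, v, l', r', hm, rfl, rfl⟩ := h
  rw [List.append_assoc, List.append_assoc]
  rcases hm with ⟨l, r, hlr, hp⟩ | ⟨l, r, hlr, j, _, _, hp⟩ <;>
    rw [Prod.ext_iff] at hp <;> obtain ⟨h1, h2⟩ := hp <;> simp only at h1 h2 <;>
    rw [h1, h2] <;> apply locF_srel_append
  · exact locF_base_A hlr v
  · exact locF_base_F hlr v

theorem splitStrict_subset {S R : Set (List α × List α)} (hSR : S ⊆ R) :
    splitStrict S ⊆ splitSRS R := by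
  rintro p (⟨l, r, hlr, hp⟩ | ⟨l, r, hlr, j, hj1, hj2, hp⟩)
  · exact Or.inl ⟨l, r, hSR hlr, hp⟩
  · exact Or.inr (Or.inr (Or.inr (Or.inr (Or.inr ⟨l, r, hSR hlr, j, hj1, hj2, hp⟩))))

theorem step_mono {β : Type*} {Q Q' : Set (List β × List β)} (h : Q ⊆ Q') {x y : List β} :
    Step Q x y → Step Q' x y := fun ⟨u, v, l, r, hm, h1, h2⟩ => ⟨u, v, l, r, h hm, h1, h2⟩

end LocMain
section ListHelpers

variable {γ : Type*}

theorem getD_append_cons (a : List γ) (x : γ) (b : List γ) (d : γ) :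
    (a ++ x :: b).getD a.length d = x := by
  rw [List.getD_append_right _ _ _ _ (le_refl _)]
  simp

theorem getD_append_cons_ne (a : List γ) (x y : γ) (b : List γ) (d : γ) (k : ℕ)
    (h : k ≠ a.length) : (a ++ x :: b).getD k d = (a ++ y :: b).getD k d := by
  rcases lt_or_gt_of_ne h with h | h
  · rw [List.getD_append _ _ _ _ h, List.getD_append _ _ _ _ h]
  · rw [List.getD_append_right _ _ _ _ (le_of_lt h), List.getD_append_right _ _ _ _ (le_of_lt h)]
    obtain ⟨m, hm⟩ : ∃ m, k - a.length = m + 1 :=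
      ⟨k - a.length - 1, by omega⟩
    rw [hm, List.getD_cons_succ, List.getD_cons_succ]

end ListHelpers

section GInv

variable {α : Type*}

def isRulB : SplitSym α → Bool
  | rul _ _ => true
  | _ => false

@[simp] theorem isRulB_rul (lr : List α × List α) (j : ℕ) : isRulB (rul lr j) = true := rfl
@[simp] theorem isRulB_symL : isRulB (symL : SplitSym α) = false := rfl

/-- The frozen-piece invariant: at least two markers and the first marker is some `R_{i,j}`. -/
def Gp (p : List (SplitSym α)) : Prop :=
  2 ≤ (marks p).length ∧ ∃ s, (marks p).head? = some s ∧ isRulB s = true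

theorem gp_congr {p q : List (SplitSym α)} (h : marks p = marks q) (hg : Gp p) : Gp q := by
  rw [Gp, ← h]; exact hg

theorem gp_prelF {Q : Set (List α × List α)} {p q} (h : PRelF Q p q) (hg : Gp p) : Gp q := by
  rcases h with ⟨l, r, a, b, _, rfl, rfl⟩ | ⟨a, m₁, m₂, b, _, h2, rfl, rfl⟩ |
    ⟨l, r, j, a, _, rfl, rfl⟩
  · exact gp_congr (by simp) hg
  · exact gp_congr (by simp [h2]) hg
  · obtain ⟨hlen, s, hh, hr⟩ := hg
    have hm1 : marks (a ++ rul (l, r) j :: (l.take j).map ca) = marks a ++ [rul (l, r) j] := by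
      simp
    have hm2 : marks (a ++ symL :: r.map ca) = marks a ++ [symL] := by simp
    rw [hm1] at hlen hh
    rw [Gp, hm2]
    cases ha : marks a with
    | nil => rw [ha] at hlen; simp at hlen
    | cons s0 rest =>
        rw [ha] at hh
        refine ⟨by simp [ha] at hlen ⊢; try omega, s, ?_, hr⟩
        simpa using hh

theorem gp_not_preC {t : List (SplitSym α)} (hg : Gp (symL :: t)) : False := by
  obtain ⟨_, s, hh, hr⟩ := hg
  have : marks (symL :: t) = symL :: marks t := by simp
  rw [this] at hh
  simp at hh
  rw [← hh] at hr
  simp at hr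

theorem gp_preE {l r : List α} {j : ℕ} {t : List (SplitSym α)}
    (hg : Gp ((l.drop j).map ca ++ t)) : Gp (rul (l, r) j :: t) := by
  obtain ⟨hlen, _⟩ := hg
  have h1 : marks ((l.drop j).map ca ++ t) = marks t := by simp
  have h2 : marks (rul (l, r) j :: t) = rul (l, r) j :: marks t := by simp
  rw [h1] at hlen
  exact ⟨by rw [h2]; simp; omega, rul (l, r) j, by rw [h2]; rfl, rfl⟩

theorem gp_of_junk {l r : List α} {j : ℕ} {t : List (SplitSym α)} (ht : marks t ≠ []) :
    Gp (rul (l, r) j :: t) := by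
  have h2 : marks (rul (l, r) j :: t) = rul (l, r) j :: marks t := by simp
  refine ⟨?_, rul (l, r) j, by rw [h2]; rfl, rfl⟩
  rw [h2]
  cases h : marks t with
  | nil => exact absurd h ht
  | cons _ _ => simp

end GInv

section StepCases

variable {α : Type*}

/-- Analysis of a localized step at a fixed piece index `i`. -/
theorem step_cases {R : Set (List α × List α)} {x y : List (SplitSym α)}
    (h : Loc R x y) (i : ℕ) :
    (allPieces y).length = (allPieces x).length ∧
    (((allPieces x).getD i [] = (allPieces y).getD i [] ∧
        (1 ≤ i → (seps x).getD (i-1) symE = (seps y).getD (i-1) symE)) ∨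
     (PRelF R ((allPieces x).getD i []) ((allPieces y).getD i []) ∧ seps x = seps y) ∨
     (1 ≤ i ∧ (allPieces x).getD i [] = symL :: (allPieces y).getD i [] ∧
        (seps x).getD (i-1) symE = symW ∧ (seps y).getD (i-1) symE = symB) ∨
     (1 ≤ i ∧ (∃ l r j t, (l, r) ∈ R ∧ (allPieces x).getD i [] = (l.drop j).map ca ++ t ∧
        (allPieces y).getD i [] = rul (l, r) j :: t) ∧
        (seps x).getD (i-1) symE = symB ∧ (seps y).getD (i-1) symE = symW)) := by
  rcases h with ⟨a, px, py, b, hx, hy, hs, hpq⟩ | ⟨a, px, py, b, sa, s, s', sb, hx, hy, hsx, hsy, hlen, hpq⟩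
  · constructor
    · rw [hx, hy]; simp
    · by_cases hi : i = a.length
      · subst hi
        rw [hx, hy, getD_append_cons, getD_append_cons]
        exact Or.inr (Or.inl ⟨hpq, hs⟩)
      · rw [hx, hy]
        exact Or.inl ⟨getD_append_cons_ne a px py b [] i hi, fun _ => by rw [hs]⟩
  · constructor
    · rw [hx, hy]; simp
    · by_cases hi : i = a.length
      · subst hi
        have h1 : 1 ≤ a.length := by omega
        have hsi : sa.length = a.length - 1 := by omega
        rw [hx, hy, getD_append_cons, getD_append_cons, hsx, hsy, ← hsi,
          getD_append_cons, getD_append_cons]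
        rcases hpq with ⟨hp, hs1, hs2⟩ | ⟨l, r, j, t, hlr, hp1, hp2, hs1, hs2⟩
        · exact Or.inr (Or.inr (Or.inl ⟨h1, by rw [hp], hs1, hs2⟩))
        · exact Or.inr (Or.inr (Or.inr ⟨h1, ⟨l, r, j, t, hlr, hp1, hp2⟩, hs1, hs2⟩))
      · refine Or.inl ⟨by rw [hx, hy]; exact getD_append_cons_ne a px py b [] i hi, fun h1 => ?_⟩
        have : i - 1 ≠ sa.length := by omega
        rw [hsx, hsy]
        exact getD_append_cons_ne sa s s' sb symE (i-1) this

/-- Extraction of the changing piece index of a strict step. -/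
theorem strict_at {S : Set (List α × List α)} {x y : List (SplitSym α)}
    (h : LocF (SRel S) x y) :
    ∃ i, i < (allPieces x).length ∧
      SRel S ((allPieces x).getD i []) ((allPieces y).getD i []) := by
  obtain ⟨a, px, py, b, hx, hy, _, hpq⟩ := h
  refine ⟨a.length, by rw [hx]; simp; try omega, ?_⟩
  rw [hx, hy, getD_append_cons, getD_append_cons]
  exact hpq

end StepCases
section SeqLemmas

variable {γ : Type*}

/-- Condensing a stuttering sequence into a genuine reduction sequence. -/
theorem condense (r₁ r₂ : γ → γ → Prop) (hsub : ∀ a b, r₁ a b → r₂ a b) (h : ℕ → γ)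
    (hstep : ∀ n, h (n + 1) = h n ∨ r₂ (h n) (h (n + 1)))
    (I : Set ℕ) (hI : I.Infinite) (hIr : ∀ n ∈ I, r₁ (h n) (h (n + 1))) :
    ∃ g : ℕ → γ, (∀ n, r₂ (g n) (g (n + 1))) ∧ {n | r₁ (g n) (g (n + 1))}.Infinite := by
  classical
  set N : Set ℕ := {n | ¬ h (n + 1) = h n} ∪ I with hN
  have hIN : I ⊆ N := fun n hn => Or.inr hn
  have hNr₂ : ∀ n ∈ N, r₂ (h n) (h (n + 1)) := by
    intro n hn
    rcases hn with hn | hn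
    · exact (hstep n).resolve_left hn
    · exact hsub _ _ (hIr n hn)
  have hNinf : N.Infinite := hI.mono hIN
  have hex : ∀ m : ℕ, ∃ n, n ∈ N ∧ m < n := by
    intro m; obtain ⟨n, hn, hm⟩ := hNinf.exists_gt m; exact ⟨n, hn, hm⟩
  have hne : ∃ n, n ∈ N := (hex 0).imp fun n hn => hn.1
  haveI I1 : ∀ m : ℕ, DecidablePred fun n => n ∈ N ∧ m < n := fun m n => Classical.dec _
  haveI I2 : DecidablePred fun n => n ∈ N := fun n => Classical.dec _
  let e : ℕ → ℕ := Nat.rec (motive := fun _ => ℕ) (Nat.find hne)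
    (fun _ (prev : ℕ) => Nat.find (hex prev))
  have he0 : e 0 ∈ N := Nat.find_spec hne
  have heS : ∀ j, e (j + 1) ∈ N ∧ e j < e (j + 1) := fun j => Nat.find_spec (hex (e j))
  have heN : ∀ j, e j ∈ N := fun j => by
    cases j with
    | zero => exact he0
    | succ j => exact (heS j).1
  have hemono : ∀ j, e j < e (j + 1) := fun j => (heS j).2
  have hbetween : ∀ j m, e j < m → m < e (j + 1) → m ∉ N := by
    intro j m h1 h2 hm
    have : e (j + 1) ≤ m := Nat.find_min' (hex (e j)) ⟨hm, h1⟩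
    omega
  have hconst : ∀ j d, e j + 1 + d ≤ e (j + 1) → h (e j + 1 + d) = h (e j + 1) := by
    intro j d
    induction d with
    | zero => intro _; rfl
    | succ d ih =>
        intro hle
        have hnotN := hbetween j (e j + 1 + d) (by omega) (by omega)
        have heq : h (e j + 1 + d + 1) = h (e j + 1 + d) := by
          by_contra hc
          exact hnotN (Or.inl hc)
        have harith : e j + 1 + (d + 1) = e j + 1 + d + 1 := by omega
        rw [harith, heq]
        exact ih (by omega)
  have hnext : ∀ j, h (e (j + 1)) = h (e j + 1) := by
    intro j
    have h1 : e j + 1 ≤ e (j + 1) := hemono j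
    have := hconst j (e (j + 1) - (e j + 1)) (by omega)
    rwa [show e j + 1 + (e (j + 1) - (e j + 1)) = e (j + 1) by omega] at this
  have hgek : ∀ j, j ≤ e j := by
    intro j
    induction j with
    | zero => exact Nat.zero_le _
    | succ j ih => have := hemono j; omega
  have hsurj : ∀ m ∈ N, ∃ j, e j = m := by
    intro m hm
    classical
    have hP0 : e 0 ≤ m := Nat.find_min' hne hm
    haveI I3 : DecidablePred fun j => e j ≤ m := fun j => Classical.dec _
    set k0 := @Nat.findGreatest (fun j => e j ≤ m) I3 m with hk0
    have hspec : e k0 ≤ m := @Nat.findGreatest_spec 0 (fun j => e j ≤ m) I3 m (Nat.zero_le m) hP0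
    rcases eq_or_lt_of_le hspec with heq | hlt
    · exact ⟨k0, heq⟩
    · exfalso
      have hP : e (k0 + 1) ≤ m := Nat.find_min' (hex (e k0)) ⟨hm, hlt⟩
      have hk1 : k0 + 1 ≤ m := le_trans (hgek (k0 + 1)) hP
      exact @Nat.findGreatest_is_greatest (k0 + 1) (fun j => e j ≤ m) I3 m
        (by omega) hk1 hP
  refine ⟨fun j => h (e j), fun j => ?_, ?_⟩
  · show r₂ (h (e j)) (h (e (j + 1)))
    rw [hnext j]; exact hNr₂ _ (heN j)
  · have hkIsub : {j | e j ∈ I} ⊆ {j | r₁ (h (e j)) (h (e (j + 1)))} := by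
      intro j hj
      show r₁ (h (e j)) (h (e (j + 1)))
      rw [hnext j]
      exact hIr _ hj
    have hIim : I ⊆ e '' {j | e j ∈ I} := by
      intro m hm
      obtain ⟨j, hj⟩ := hsurj m (hIN hm)
      exact ⟨j, by rw [Set.mem_setOf_eq, hj]; exact hm, hj⟩
    have hkinf : {j | e j ∈ I}.Infinite := by
      by_contra hkf
      rw [Set.not_infinite] at hkf
      exact hI ((hkf.image e).subset hIim)
    exact hkinf.mono hkIsub

/-- Gluing finite reduction segments into an infinite reduction sequence. -/
theorem glue (r₁ r₂ : γ → γ → Prop) (t : ℕ → γ) (str : ℕ → Prop)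
    (hseg : ∀ n, ∃ k : ℕ, ∃ g : ℕ → γ, 1 ≤ k ∧ g 0 = t n ∧ g k = t (n + 1) ∧
        (∀ m, m < k → r₂ (g m) (g (m + 1))) ∧
        (str n → ∃ m, m < k ∧ r₁ (g m) (g (m + 1))))
    (hinf : {n | str n}.Infinite) :
    ∃ f : ℕ → γ, (∀ n, r₂ (f n) (f (n + 1))) ∧ {n | r₁ (f n) (f (n + 1))}.Infinite := by
  classical
  choose k g hk hg0 hgk hstep hstr using hseg
  let pos : ℕ → ℕ × ℕ := fun j =>
    Nat.rec (0, 0) (fun _ p => if p.2 + 1 < k p.1 then (p.1, p.2 + 1) else (p.1 + 1, 0)) j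
  have hposS : ∀ j, pos (j + 1)
      = if (pos j).2 + 1 < k (pos j).1 then ((pos j).1, (pos j).2 + 1)
        else ((pos j).1 + 1, 0) := fun j => rfl
  have hInv : ∀ j, (pos j).2 < k (pos j).1 := by
    intro j
    induction j with
    | zero => exact hk 0
    | succ j ih =>
        rw [hposS j]
        by_cases hc : (pos j).2 + 1 < k (pos j).1
        · rw [if_pos hc]; exact hc
        · rw [if_neg hc]; exact hk _
  set F : ℕ → γ := fun j => g (pos j).1 (pos j).2 with hF
  have hFnext : ∀ j, F (j + 1) = g (pos j).1 ((pos j).2 + 1) := by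
    intro j
    show g (pos (j + 1)).1 (pos (j + 1)).2 = _
    rw [hposS j]
    by_cases hc : (pos j).2 + 1 < k (pos j).1
    · rw [if_pos hc]
    · rw [if_neg hc]
      have heq : (pos j).2 + 1 = k (pos j).1 := by have := hInv j; omega
      show g ((pos j).1 + 1) 0 = _
      rw [hg0 ((pos j).1 + 1), heq, hgk (pos j).1]
  have hr₂ : ∀ j, r₂ (F j) (F (j + 1)) := fun j => by
    rw [hFnext j]; exact hstep _ _ (hInv j)
  let J : ℕ → ℕ := fun n => Nat.rec 0 (fun n' acc => acc + k n') n
  have hJS : ∀ n, J (n + 1) = J n + k n := fun n => rfl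
  have key : ∀ n, pos (J n) = (n, 0) := by
    intro n
    induction n with
    | zero => rfl
    | succ n ih =>
        have inner : ∀ m, m < k n → pos (J n + m) = (n, m) := by
          intro m
          induction m with
          | zero => intro _; simpa using ih
          | succ m ihm =>
              intro hm
              have h1 := ihm (by omega)
              have harith : J n + (m + 1) = (J n + m) + 1 := by omega
              rw [harith, hposS, h1]
              simp only
              rw [if_pos (by simpa using hm)]
        have hlast := inner (k n - 1) (by have := hk n; omega)
        have harith : J (n + 1) = (J n + (k n - 1)) + 1 := by
          rw [hJS]; have := hk n; omega
        rw [harith, hposS, hlast]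
        simp only
        rw [if_neg (by have := hk n; simp; omega)]
  have inner : ∀ n m, m < k n → pos (J n + m) = (n, m) := by
    intro n m
    induction m with
    | zero => intro _; simpa using key n
    | succ m ihm =>
        intro hm
        have h1 := ihm (by omega)
        have harith : J n + (m + 1) = (J n + m) + 1 := by omega
        rw [harith, hposS, h1]
        simp only
        rw [if_pos (by simpa using hm)]
  have hJge : ∀ n, n ≤ J n := by
    intro n
    induction n with
    | zero => exact Nat.zero_le _
    | succ n ih => rw [hJS]; have := hk n; omega
  refine ⟨F, hr₂, ?_⟩
  apply Set.infinite_of_not_bddAbove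
  rintro ⟨ub, hub⟩
  obtain ⟨n, hn, hgt⟩ := hinf.exists_gt ub
  obtain ⟨m, hm, hr1⟩ := hstr n hn
  have hpj : pos (J n + m) = (n, m) := inner n m hm
  have hmem : (J n + m) ∈ {j | r₁ (F j) (F (j + 1))} := by
    show r₁ (F (J n + m)) (F (J n + m + 1))
    rw [hFnext, hF]
    simp only [hpj]
    exact hr1
  have := hub hmem
  have := hJge n
  omega

end SeqLemmas
section Soundness

variable {α : Type*}

theorem shift_infinite {A : Set ℕ} (hA : A.Infinite) (T : ℕ) (P : ℕ → Prop)
    (hP : ∀ a ∈ A, T ≤ a → P (a - T)) : {n | P n}.Infinite := by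
  apply Set.infinite_of_not_bddAbove
  rintro ⟨ub, hub⟩
  obtain ⟨a, ha, hgt⟩ := hA.exists_gt (ub + T)
  have hmem : (a - T) ∈ {n | P n} := hP a ha (by omega)
  have := hub hmem
  omega

theorem soundness (S R : Set (List α × List α)) (hSR : S ⊆ R)
    (hcyc : RelTerminating (CycleStep S) (CycleStep R)) :
    RelTerminating (Step (splitStrict S)) (Step (splitSRS R)) := by
  rintro ⟨f, hf, hinf⟩
  classical
  have hloc : ∀ n, Loc R (f n) (f (n + 1)) := fun n => loc_of_step (hf n)
  have hlen1 : ∀ n, (allPieces (f (n + 1))).length = (allPieces (f n)).length :=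
    fun n => (step_cases (hloc n) 0).1
  have hlenK : ∀ n, (allPieces (f n)).length = (allPieces (f 0)).length := by
    intro n
    induction n with
    | zero => rfl
    | succ n ih => rw [hlen1 n, ih]
  have hchoice : ∀ n, ∃ i, Step (splitStrict S) (f n) (f (n + 1)) →
      i < (allPieces (f 0)).length ∧
      SRel S ((allPieces (f n)).getD i []) ((allPieces (f (n + 1))).getD i []) := by
    intro n
    by_cases h : Step (splitStrict S) (f n) (f (n + 1))
    · obtain ⟨i, hi, hrel⟩ := strict_at (locF_of_strict_step h)
      exact ⟨i, fun _ => ⟨by rw [← hlenK n]; exact hi, hrel⟩⟩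
    · exact ⟨0, fun hc => absurd hc h⟩
  choose idx hidx using hchoice
  have hpig : ∃ i, {n | Step (splitStrict S) (f n) (f (n + 1)) ∧ idx n = i}.Infinite := by
    by_contra hno
    push_neg at hno
    have hsub : {n : ℕ | Step (splitStrict S) (f n) (f (n + 1))} ⊆
        ⋃ i ∈ Finset.range (allPieces (f 0)).length,
          {n | Step (splitStrict S) (f n) (f (n + 1)) ∧ idx n = i} := by
      intro n hn
      have hi := (hidx n hn).1
      simp only [Set.mem_iUnion]
      exact ⟨idx n, by simpa using hi, hn, rfl⟩
    have hfin : (⋃ i ∈ Finset.range (allPieces (f 0)).length,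
        {n | Step (splitStrict S) (f n) (f (n + 1)) ∧ idx n = i}).Finite :=
      Set.Finite.biUnion (Finset.range _).finite_toSet
        (fun i _ => hno i)
    exact hinf (hfin.subset hsub)
  obtain ⟨i0, hi0⟩ := hpig
  have hcases : ∀ n,
      (psi ((allPieces (f n)).getD i0 []) = psi ((allPieces (f (n + 1))).getD i0 []) ∨
        CycleStep R (psi ((allPieces (f n)).getD i0 []))
          (psi ((allPieces (f (n + 1))).getD i0 []))) ∨
      (1 ≤ i0 ∧ (Gp ((allPieces (f (n + 1))).getD i0 []) ∧
          (seps (f (n + 1))).getD (i0 - 1) symE = symW) ∧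
        (seps (f n)).getD (i0 - 1) symE = symB) := by
    intro n
    obtain ⟨_, hc⟩ := step_cases (hloc n) i0
    rcases hc with ⟨hpeq, _⟩ | ⟨hrel, _⟩ | ⟨h1, hpeq, hs1, hs2⟩ |
      ⟨h1, ⟨l, r, j, t, hlr, hp1, hp2⟩, hs1, hs2⟩
    · exact Or.inl (Or.inl (congrArg psi hpeq))
    · exact Or.inl (psi_prelF hrel)
    · refine Or.inl (Or.inl ?_)
      rw [hpeq, psi_preC]
    · by_cases hmt : marks t = []
      · refine Or.inl (Or.inl ?_)
        rw [hp1, hp2]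
        exact psi_preE hmt
      · refine Or.inr ⟨h1, ⟨?_, hs2⟩, hs1⟩
        rw [hp2]
        exact gp_of_junk hmt
  have habs : ∀ n, 1 ≤ i0 →
      Gp ((allPieces (f n)).getD i0 []) ∧ (seps (f n)).getD (i0 - 1) symE = symW →
      Gp ((allPieces (f (n + 1))).getD i0 []) ∧
        (seps (f (n + 1))).getD (i0 - 1) symE = symW := by
    intro n h1 hH
    obtain ⟨_, hc⟩ := step_cases (hloc n) i0
    rcases hc with ⟨hpeq, hseq⟩ | ⟨hrel, hseq⟩ | ⟨_, hpeq, hs1, hs2⟩ |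
      ⟨_, ⟨l, r, j, t, hlr, hp1, hp2⟩, hs1, hs2⟩
    · exact ⟨hpeq ▸ hH.1, (hseq h1) ▸ hH.2⟩
    · exact ⟨gp_prelF hrel hH.1, by rw [← hseq]; exact hH.2⟩
    · exfalso
      have hG := hH.1
      rw [hpeq] at hG
      exact gp_not_preC hG
    · exfalso
      have hW := hH.2
      rw [hs1] at hW
      exact absurd hW (by simp)
  have hGoodTail : ∃ T, ∀ m, T ≤ m →
      (psi ((allPieces (f m)).getD i0 []) = psi ((allPieces (f (m + 1))).getD i0 []) ∨
        CycleStep R (psi ((allPieces (f m)).getD i0 []))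
          (psi ((allPieces (f (m + 1))).getD i0 []))) := by
    by_cases hall : ∀ n,
        (psi ((allPieces (f n)).getD i0 []) = psi ((allPieces (f (n + 1))).getD i0 []) ∨
          CycleStep R (psi ((allPieces (f n)).getD i0 []))
            (psi ((allPieces (f (n + 1))).getD i0 [])))
    · exact ⟨0, fun m _ => hall m⟩
    · push_neg at hall
      obtain ⟨n0, hn0⟩ := hall
      obtain ⟨hi1, hH0, _⟩ := (hcases n0).resolve_left
        (by
          rintro (h | h)
          · exact hn0.1 h
          · exact hn0.2 h)
      have hH : ∀ m, n0 + 1 ≤ m →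
          Gp ((allPieces (f m)).getD i0 []) ∧ (seps (f m)).getD (i0 - 1) symE = symW := by
        intro m hm
        induction m with
        | zero => omega
        | succ m ih =>
            rcases Nat.lt_or_ge n0 m with hlt | hge
            · exact habs m hi1 (ih (by omega))
            · have hnm : n0 = m := by omega
              rw [← hnm]
              exact hH0
      refine ⟨n0 + 1, fun m hm => ?_⟩
      rcases hcases m with hg | ⟨_, _, hbad⟩
      · exact hg
      · exfalso
        have hW := (hH m hm).2
        rw [hbad] at hW
        exact absurd hW (by simp)
  obtain ⟨T, hT⟩ := hGoodTail
  have hIinf : {n : ℕ | Step (splitStrict S) (f (n + T)) (f (n + T + 1)) ∧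
      idx (n + T) = i0}.Infinite := by
    refine shift_infinite hi0 T _ ?_
    intro a ha hTa
    have e : a - T + T = a := by omega
    rw [e]
    exact ha
  obtain ⟨g, hg2, hg1⟩ := condense (CycleStep S) (CycleStep R)
    (fun a b h => cycleStep_mono hSR h)
    (fun n => psi ((allPieces (f (n + T))).getD i0 []))
    (by
      intro n
      have hgn := hT (n + T) (by omega)
      show psi ((allPieces (f (n + 1 + T))).getD i0 [])
          = psi ((allPieces (f (n + T))).getD i0 []) ∨
        CycleStep R (psi ((allPieces (f (n + T))).getD i0 []))
          (psi ((allPieces (f (n + 1 + T))).getD i0 []))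
      have e : n + 1 + T = n + T + 1 := by omega
      rw [e]
      rcases hgn with h | h
      · exact Or.inl h.symm
      · exact Or.inr h)
    {n : ℕ | Step (splitStrict S) (f (n + T)) (f (n + T + 1)) ∧ idx (n + T) = i0} hIinf
    (by
      intro n hn
      obtain ⟨hmem, hidx0⟩ := hn
      have hrel := (hidx (n + T) hmem).2
      rw [hidx0] at hrel
      show CycleStep S (psi ((allPieces (f (n + T))).getD i0 []))
        (psi ((allPieces (f (n + 1 + T))).getD i0 []))
      have e : n + 1 + T = n + T + 1 := by omega
      rw [e]
      exact psi_srel hrel)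
  exact hcyc ⟨g, hg2, hg1⟩

end Soundness
section Chains

variable {γ : Type*}

/-- a finite (possibly empty) chain of `r`-steps -/
def NChain (r : γ → γ → Prop) (x y : γ) : Prop :=
  ∃ k : ℕ, ∃ g : ℕ → γ, g 0 = x ∧ g k = y ∧ ∀ m, m < k → r (g m) (g (m + 1))

/-- a nonempty chain of `r₂` steps that contains an `r₁` step whenever `P` holds -/
def Segment (r₁ r₂ : γ → γ → Prop) (P : Prop) (x y : γ) : Prop :=
  ∃ k : ℕ, ∃ g : ℕ → γ, 1 ≤ k ∧ g 0 = x ∧ g k = y ∧ (∀ m, m < k → r₂ (g m) (g (m + 1))) ∧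
    (P → ∃ m, m < k ∧ r₁ (g m) (g (m + 1)))

theorem nchain_refl (r : γ → γ → Prop) (x : γ) : NChain r x x :=
  ⟨0, fun _ => x, rfl, rfl, fun m hm => absurd hm (by omega)⟩

theorem nchain_congr {r : γ → γ → Prop} {x y x' y' : γ} (hx : x = x') (hy : y = y')
    (h : NChain r x y) : NChain r x' y' := hx ▸ hy ▸ h

theorem nchain_single {r : γ → γ → Prop} {x y : γ} (h : r x y) : NChain r x y := by
  refine ⟨1, fun m => if m = 0 then x else y, by simp, by simp, ?_⟩
  intro m hm
  have hm0 : m = 0 := by omega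
  subst hm0
  simpa using h

theorem nchain_trans {r : γ → γ → Prop} {x y z : γ} (h1 : NChain r x y)
    (h2 : NChain r y z) : NChain r x z := by
  obtain ⟨k1, g1, hg10, hg1k, hs1⟩ := h1
  obtain ⟨k2, g2, hg20, hg2k, hs2⟩ := h2
  refine ⟨k1 + k2, fun m => if m ≤ k1 then g1 m else g2 (m - k1), by simp [hg10], ?_, ?_⟩
  · beta_reduce
    by_cases hk : k2 = 0
    · subst hk
      simp only [Nat.add_zero, if_pos (le_refl k1)]
      rw [hg1k, ← hg2k, hg20]
    · rw [if_neg (by omega)]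
      rw [show k1 + k2 - k1 = k2 by omega, hg2k]
  · intro m hm
    beta_reduce
    by_cases h1m : m < k1
    · rw [if_pos (by omega : m ≤ k1), if_pos (by omega : m + 1 ≤ k1)]
      exact hs1 m h1m
    · have hm1 : ¬ (m + 1 ≤ k1) := by omega
      rw [if_neg hm1]
      by_cases hmk : m = k1
      · subst hmk
        rw [if_pos (le_refl _), hg1k, show m + 1 - m = 1 by omega, ← hg20]
        exact hs2 0 (by omega)
      · rw [if_neg (by omega)]
        have e1 : m + 1 - k1 = (m - k1) + 1 := by omega
        rw [e1]
        exact hs2 (m - k1) (by omega)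

theorem segment_of {r₁ r₂ : γ → γ → Prop} {P : Prop} {x y z u : γ}
    (h1 : NChain r₂ x y) (h2 : r₂ y z) (hstrict : P → r₁ y z) (h3 : NChain r₂ z u) :
    Segment r₁ r₂ P x u := by
  obtain ⟨k1, g1, hg10, hg1k, hs1⟩ := h1
  obtain ⟨k3, g3, hg30, hg3k, hs3⟩ := h3
  refine ⟨k1 + 1 + k3, fun m => if m ≤ k1 then g1 m else g3 (m - (k1 + 1)), by omega,
    by simp [hg10], ?_, ?_, ?_⟩
  · beta_reduce
    rw [if_neg (by omega), show k1 + 1 + k3 - (k1 + 1) = k3 by omega, hg3k]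
  · intro m hm
    beta_reduce
    by_cases h1m : m < k1
    · rw [if_pos (by omega : m ≤ k1), if_pos (by omega : m + 1 ≤ k1)]
      exact hs1 m h1m
    · have hm1 : ¬ (m + 1 ≤ k1) := by omega
      rw [if_neg hm1]
      by_cases hmk : m = k1
      · subst hmk
        rw [if_pos (le_refl _), hg1k, show m + 1 - (m + 1) = 0 by omega, hg30]
        exact h2
      · rw [if_neg (by omega)]
        have e1 : m + 1 - (k1 + 1) = (m - (k1 + 1)) + 1 := by omega
        rw [e1]
        exact hs3 (m - (k1 + 1)) (by omega)
  · intro hp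
    refine ⟨k1, by omega, ?_⟩
    beta_reduce
    rw [if_pos (le_refl _), if_neg (by omega), hg1k,
      show k1 + 1 - (k1 + 1) = 0 by omega, hg30]
    exact hstrict hp

end Chains

section Completeness

variable {α : Type*}

/-- encoding of a cycle representative as a string of `split R` -/
def enc (u : List α) : List (SplitSym α) := symB :: u.map ca ++ [symE]

theorem step_rule {Q : Set (List (SplitSym α) × List (SplitSym α))}
    {l' r' x y : List (SplitSym α)} (h : (l', r') ∈ Q) (u v : List (SplitSym α))
    (hx : x = u ++ l' ++ v) (hy : y = u ++ r' ++ v) : Step Q x y :=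
  ⟨u, v, l', r', h, hx, hy⟩

theorem memA {Q : Set (List α × List α)} {l r : List α} (h : (l, r) ∈ Q) :
    (l.map ca, r.map ca) ∈ splitSRS Q := Or.inl ⟨l, r, h, rfl⟩

theorem memA' {Q : Set (List α × List α)} {l r : List α} (h : (l, r) ∈ Q) :
    (l.map ca, r.map ca) ∈ splitStrict Q := Or.inl ⟨l, r, h, rfl⟩

theorem memB {Q : Set (List α × List α)} (a : α) :
    ([cbar a, symL], [symL, ca a]) ∈ splitSRS Q := Or.inr (Or.inl ⟨a, rfl⟩)

theorem memC {Q : Set (List α × List α)} :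
    (([symW, symL] : List (SplitSym α)), [symB]) ∈ splitSRS Q :=
  Or.inr (Or.inr (Or.inl rfl))

theorem memD {Q : Set (List α × List α)} {l r : List α} (h : (l, r) ∈ Q) {j : ℕ}
    (hj1 : 1 ≤ j) (hj2 : j < l.length) (a : α) :
    ([rul (l, r) j, ca a], [cbar a, rul (l, r) j]) ∈ splitSRS Q :=
  Or.inr (Or.inr (Or.inr (Or.inl ⟨l, r, h, j, hj1, hj2, a, rfl⟩)))

theorem memE {Q : Set (List α × List α)} {l r : List α} (h : (l, r) ∈ Q) {j : ℕ}
    (hj1 : 1 ≤ j) (hj2 : j < l.length) :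
    (symB :: (l.drop j).map ca, [symW, rul (l, r) j]) ∈ splitSRS Q :=
  Or.inr (Or.inr (Or.inr (Or.inr (Or.inl ⟨l, r, h, j, hj1, hj2, rfl⟩))))

theorem memF {Q : Set (List α × List α)} {l r : List α} (h : (l, r) ∈ Q) {j : ℕ}
    (hj1 : 1 ≤ j) (hj2 : j < l.length) :
    (rul (l, r) j :: (l.take j).map ca ++ [symE], symL :: r.map ca ++ [symE]) ∈ splitSRS Q :=
  Or.inr (Or.inr (Or.inr (Or.inr (Or.inr ⟨l, r, h, j, hj1, hj2, rfl⟩))))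

theorem memF' {Q : Set (List α × List α)} {l r : List α} (h : (l, r) ∈ Q) {j : ℕ}
    (hj1 : 1 ≤ j) (hj2 : j < l.length) :
    (rul (l, r) j :: (l.take j).map ca ++ [symE], symL :: r.map ca ++ [symE]) ∈ splitStrict Q :=
  Or.inr ⟨l, r, h, j, hj1, hj2, rfl⟩

theorem dchain {Q : Set (List α × List α)} {l r : List α} (hlr : (l, r) ∈ Q) {j : ℕ}
    (hj1 : 1 ≤ j) (hj2 : j < l.length) :
    ∀ (v : List α) (p q : List (SplitSym α)),
      NChain (Step (splitSRS Q)) (p ++ rul (l, r) j :: (v.map ca ++ q))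
        (p ++ v.map cbar ++ rul (l, r) j :: q) := by
  intro v
  induction v with
  | nil => intro p q; exact nchain_congr rfl (by simp) (nchain_refl _ _)
  | cons a v' ih =>
      intro p q
      have hstep : Step (splitSRS Q) (p ++ rul (l, r) j :: ((a :: v').map ca ++ q))
          ((p ++ [cbar a]) ++ rul (l, r) j :: (v'.map ca ++ q)) :=
        step_rule (memD hlr hj1 hj2 a) p (v'.map ca ++ q) (by simp) (by simp)
      refine nchain_trans (nchain_single hstep) (nchain_congr rfl ?_ (ih (p ++ [cbar a]) q))
      simp

theorem bchain {Q : Set (List α × List α)} :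
    ∀ (v : List α) (p q : List (SplitSym α)),
      NChain (Step (splitSRS Q)) (p ++ v.map cbar ++ symL :: q)
        (p ++ symL :: (v.map ca ++ q)) := by
  intro v
  induction v with
  | nil => intro p q; exact nchain_congr (by simp) rfl (nchain_refl _ _)
  | cons a v' ih =>
      intro p q
      have h1 : NChain (Step (splitSRS Q)) (p ++ (a :: v').map cbar ++ symL :: q)
          ((p ++ [cbar a]) ++ symL :: (v'.map ca ++ q)) :=
        nchain_congr (by simp) rfl (ih (p ++ [cbar a]) q)
      have hstep : Step (splitSRS Q) ((p ++ [cbar a]) ++ symL :: (v'.map ca ++ q))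
          (p ++ symL :: ((a :: v').map ca ++ q)) :=
        step_rule (memB a) p (v'.map ca ++ q) (by simp) (by simp)
      exact nchain_trans h1 (nchain_single hstep)

theorem segA {S R : Set (List α × List α)} {l r : List α} (hlr : (l, r) ∈ R) {P : Prop}
    (hs : P → (l, r) ∈ S) (u v : List α) :
    Segment (Step (splitStrict S)) (Step (splitSRS R)) P
      (enc (u ++ l ++ v)) (enc (u ++ r ++ v)) := by
  refine segment_of (nchain_refl _ _)
    (step_rule (memA hlr) (symB :: u.map ca) (v.map ca ++ [symE]) (by simp [enc]) (by simp [enc]))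
    (fun hp => step_rule (memA' (hs hp)) (symB :: u.map ca) (v.map ca ++ [symE])
      (by simp [enc]) (by simp [enc]))
    (nchain_refl _ _)

theorem segWrap {S R : Set (List α × List α)} {l r : List α} (hlr : (l, r) ∈ R) {P : Prop}
    (hs : P → (l, r) ∈ S) {j : ℕ} (hj1 : 1 ≤ j) (hj2 : j < l.length) (w : List α) :
    Segment (Step (splitStrict S)) (Step (splitSRS R)) P
      (enc (l.drop j ++ w ++ l.take j)) (enc (w ++ r)) := by
  have hE : Step (splitSRS R) (enc (l.drop j ++ w ++ l.take j))
      ([symW] ++ rul (l, r) j :: (w.map ca ++ ((l.take j).map ca ++ [symE]))) :=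
    step_rule (memE hlr hj1 hj2) [] (w.map ca ++ (l.take j).map ca ++ [symE])
      (by simp [enc]) (by simp)
  have hD := dchain hlr hj1 hj2 w [symW] ((l.take j).map ca ++ [symE])
  have hpre : NChain (Step (splitSRS R)) (enc (l.drop j ++ w ++ l.take j))
      ([symW] ++ w.map cbar ++ rul (l, r) j :: ((l.take j).map ca ++ [symE])) :=
    nchain_trans (nchain_single hE) hD
  have hFx : [symW] ++ w.map cbar ++ rul (l, r) j :: ((l.take j).map ca ++ [symE])
      = (symW :: w.map cbar) ++ (rul (l, r) j :: (l.take j).map ca ++ [symE]) ++ [] := by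
    simp
  have hFy : (symW :: w.map cbar) ++ (symL :: r.map ca ++ [symE]) ++ []
      = [symW] ++ w.map cbar ++ symL :: (r.map ca ++ [symE]) := by simp
  have hB := bchain (Q := R) w [symW] (r.map ca ++ [symE])
  have hC : Step (splitSRS R) ([symW] ++ symL :: (w.map ca ++ (r.map ca ++ [symE])))
      (enc (w ++ r)) :=
    step_rule memC [] (w.map ca ++ (r.map ca ++ [symE])) (by simp) (by simp [enc])
  have hpost : NChain (Step (splitSRS R))
      ((symW :: w.map cbar) ++ (symL :: r.map ca ++ [symE]) ++ []) (enc (w ++ r)) :=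
    nchain_trans (nchain_congr hFy.symm rfl hB) (nchain_single hC)
  exact segment_of hpre
    (step_rule (memF hlr hj1 hj2) (symW :: w.map cbar) [] hFx rfl)
    (fun hp => step_rule (memF' (hs hp) hj1 hj2) (symW :: w.map cbar) [] hFx rfl)
    hpost

/-- simulation of one cycle rewrite step by a split segment -/
theorem simulate {S R : Set (List α × List α)} {l r : List α} (hlr : (l, r) ∈ R)
    (hl : l ≠ []) {P : Prop} (hs : P → (l, r) ∈ S) {w z : List α} (hz : Sim (l ++ w) z) :
    ∃ z' : List α, Sim (r ++ w) z' ∧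
      Segment (Step (splitStrict S)) (Step (splitSRS R)) P (enc z) (enc z') := by
  obtain ⟨w₁, w₂, h1, h2⟩ := hz
  rcases List.append_eq_append_iff.mp h1 with ⟨e, hw1, hw⟩ | ⟨c', hl', hw2⟩
  · -- w₁ = l ++ e, w = e ++ w₂, z = w₂ ++ (l ++ e)
    refine ⟨w₂ ++ r ++ e, ⟨r ++ e, w₂, by simp [hw], by simp⟩, ?_⟩
    have hz2 : z = w₂ ++ l ++ e := by rw [h2, hw1]; simp
    rw [hz2]
    exact segA hlr hs w₂ e
  · -- l = w₁ ++ c', w₂ = c' ++ w, z = (c' ++ w) ++ w₁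
    by_cases hc : c' = []
    · -- l = w₁, z = w ++ l
      subst hc
      rw [List.append_nil] at hl'
      refine ⟨w ++ r, ⟨r, w, rfl, rfl⟩, ?_⟩
      have hz2 : z = w ++ l ++ [] := by rw [h2, hw2, hl']; simp
      rw [hz2]
      have := segA hlr hs w ([] : List α)
      simpa using this
    · by_cases hw1e : w₁ = []
      · -- l = c', z = l ++ w
        subst hw1e
        simp only [List.nil_append] at hl'
        refine ⟨r ++ w, sim_refl _, ?_⟩
        have hz2 : z = [] ++ l ++ w := by rw [h2, hw2, ← hl']; simp
        rw [hz2]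
        have := segA hlr hs ([] : List α) w
        simpa using this
      · -- genuine wrap: j = w₁.length
        have hj1 : 1 ≤ w₁.length := by
          cases w₁ with
          | nil => exact absurd rfl hw1e
          | cons _ _ => simp
        have hj2 : w₁.length < l.length := by
          rw [hl']
          have : c'.length ≠ 0 := fun h => hc (List.eq_nil_of_length_eq_zero h)
          simp
          omega
        have htake : l.take w₁.length = w₁ := by rw [hl']; exact List.take_left
        have hdrop : l.drop w₁.length = c' := by rw [hl']; exact List.drop_left
        refine ⟨w ++ r, ⟨r, w, rfl, rfl⟩, ?_⟩
        have hz2 : z = l.drop w₁.length ++ w ++ l.take w₁.length := by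
          rw [h2, hw2, htake, hdrop]
        rw [hz2]
        exact segWrap hlr hs hj1 hj2 w

/-- Completeness direction -/
theorem completeness (S R : Set (List α × List α)) (hSR : S ⊆ R)
    (hne : ∀ p ∈ R, p.1 ≠ [])
    (hsplit : RelTerminating (Step (splitStrict S)) (Step (splitSRS R))) :
    RelTerminating (CycleStep S) (CycleStep R) := by
  rintro ⟨c, hc, hinf⟩
  classical
  have hw : ∀ n, ∃ lr : List α × List α, ∃ w, lr ∈ R ∧
      (CycleStep S (c n) (c (n + 1)) → lr ∈ S) ∧ Sim (lr.1 ++ w) (c n) ∧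
      Sim (lr.2 ++ w) (c (n + 1)) := by
    intro n
    by_cases hs : CycleStep S (c n) (c (n + 1))
    · obtain ⟨l, r, w, hm, h1, h2⟩ := hs
      exact ⟨(l, r), w, hSR hm, fun _ => hm, h1, h2⟩
    · obtain ⟨l, r, w, hm, h1, h2⟩ := hc n
      exact ⟨(l, r), w, hm, fun hcon => absurd hcon hs, h1, h2⟩
  choose LR W hR hS hsim1 hsim2 using hw
  -- build the sequence of representatives together with the invariant
  have hbuild : ∀ n : ℕ, ∀ z : List α, Sim ((LR n).1 ++ W n) z →
      ∃ z' : List α, Sim ((LR (n + 1)).1 ++ W (n + 1)) z' ∧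
        Segment (Step (splitStrict S)) (Step (splitSRS R))
          (CycleStep S (c n) (c (n + 1))) (enc z) (enc z') := by
    intro n z hsz
    obtain ⟨z', hsim', hseg⟩ := simulate (show ((LR n).1, (LR n).2) ∈ R by
        rw [Prod.mk.eta]; exact hR n)
      (hne _ (hR n)) (fun hp => by rw [Prod.mk.eta]; exact hS n hp) hsz
    refine ⟨z', ?_, hseg⟩
    exact sim_trans (hsim1 (n + 1)) (sim_trans (sim_symm (hsim2 n)) hsim')
  -- recursive construction
  let Z : (n : ℕ) → {z : List α // Sim ((LR n).1 ++ W n) z} :=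
    fun n => Nat.rec (motive := fun n => {z : List α // Sim ((LR n).1 ++ W n) z})
      ⟨c 0, hsim1 0⟩
      (fun n prev => ⟨Classical.choose (hbuild n prev.1 prev.2),
        (Classical.choose_spec (hbuild n prev.1 prev.2)).1⟩) n
  have hZseg : ∀ n, Segment (Step (splitStrict S)) (Step (splitSRS R))
      (CycleStep S (c n) (c (n + 1))) (enc (Z n).1) (enc (Z (n + 1)).1) := by
    intro n
    exact (Classical.choose_spec (hbuild n (Z n).1 (Z n).2)).2
  obtain ⟨f, hf2, hf1⟩ := glue (Step (splitStrict S)) (Step (splitSRS R))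
    (fun n => enc (Z n).1) (fun n => CycleStep S (c n) (c (n + 1)))
    (fun n => hZseg n) hinf
  exact hsplit ⟨f, hf2, hf1⟩

end Completeness

/-- soundness and completeness of `split_rel` for relative termination. -/
theorem splitRel_sound_and_complete {α : Type*} [Finite α] (S R : Set (List α × List α))
    (hSR : S ⊆ R) (hfin : R.Finite) (hne : ∀ p ∈ R, p.1 ≠ []) :
    RelTerminating (Step (splitStrict S)) (Step (splitSRS R)) ↔
      RelTerminating (CycleStep S) (CycleStep R) :=
  ⟨fun h => completeness S R hSR hne h, fun h => soundness S R hSR h⟩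

end CycleRewriting
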